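/- Let X, Y, W be real Banach spaces, let L be a nonempty symmetric closed subset of S_X × S_{Y*} having property (P), and let (Z, ‖·‖_Z) be a Banach space which is a linear subspace of C_{b,e}(L, W) such that (i) ‖Φ‖_Z ≥ ‖Φ‖_∞ for all Φ ∈ Z, and (ii) Z contains every map [T]⊕w : (x,y*) ↦ y*(T(x))·w with T : X → Y finite-rank bounded linear and w ∈ W, with ‖[T]⊕w‖_Z ≤ ‖T‖·‖w‖. Then the following weak* uniform separation property holds: there exists ε₀ > 0 such that for every ε ∈ (0, ε₀) there is ϖ'(ε) > 0 so that for every (x,y*) ∈ L and every w* in the unit sphere of W* there exists Φ ∈ Z with ‖Φ‖_Z ≤ 1 such that for all (z,t*) ∈ L and all v* in the unit sphere of W*, min(‖x−z‖+‖y*−t*‖, ‖x+z‖+‖y*+t*‖) ≥ ε implies w*(Φ(x,y*)) − ϖ'(ε) ≥ v*(Φ(z,t*)). -/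

import Mathlib

set_option maxHeartbeats 1000000
set_option synthInstance.maxHeartbeats 400000


open Filter Topology Set

noncomputable section

variable {X Y W : Type*}
  [NormedAddCommGroup X] [NormedSpace ℝ X]
  [NormedAddCommGroup Y] [NormedSpace ℝ Y]
  [NormedAddCommGroup W] [NormedSpace ℝ W]

/-- The Hausdorff distance between the symmetric pairs `Γ p = {p, -p}` and `Γ q = {q, -q}`
in `X × Y*` with the sum norm. -/
def dHG (p q : X × (Y →L[ℝ] ℝ)) : ℝ :=
  min (‖p.1 - q.1‖ + ‖p.2 - q.2‖) (‖p.1 + q.1‖ + ‖p.2 + q.2‖)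

/-- Property (P) for a subset `L ⊆ S_X × S_{Y*}`. -/
def PropP (L : Set (X × (Y →L[ℝ] ℝ))) : Prop :=
  ∃ ε₀ > (0 : ℝ), ∀ ε : ℝ, 0 < ε → ε < ε₀ → ∃ ϖ > (0 : ℝ), ∀ p ∈ L,
    ∃ (xs : X →L[ℝ] ℝ) (ye : Y), ‖xs‖ ≤ 1 ∧ ‖ye‖ ≤ 1 ∧
      ∀ q ∈ L, ε ≤ dHG p q → |xs q.1| + |q.2 ye| ≤ xs p.1 + p.2 ye - ϖ

/-- The sup norm `‖Φ‖_∞` of a function over `L`. -/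
def supNormOn (L : Set (X × (Y →L[ℝ] ℝ))) (Φ : X × (Y →L[ℝ] ℝ) → W) : ℝ :=
  sSup ((fun p => ‖Φ p‖) '' L)

/-- Membership in `C_{b,e}(L, W)`: bounded, continuous (on `L`) and even. -/
def IsCbe (L : Set (X × (Y →L[ℝ] ℝ))) (Φ : X × (Y →L[ℝ] ℝ) → W) : Prop :=
  ContinuousOn Φ L ∧ BddAbove ((fun p => ‖Φ p‖) '' L) ∧ ∀ p ∈ L, Φ (-p) = Φ p

/-- `Φ` attains `d_H`-strongly its maximum on `L`. -/
def AttainsDHStrongly (L : Set (X × (Y →L[ℝ] ℝ))) (Φ : X × (Y →L[ℝ] ℝ) → W) : Prop :=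
  ∃ p₀ ∈ L, ‖Φ p₀‖ = supNormOn L Φ ∧
    ∀ u : ℕ → X × (Y →L[ℝ] ℝ), (∀ n, u n ∈ L) →
      Tendsto (fun n => ‖Φ (u n)‖) atTop (𝓝 (supNormOn L Φ)) →
      Tendsto (fun n => dHG (u n) p₀) atTop (𝓝 0)

/-- A finite-rank continuous linear operator. -/
def FinRank (T : X →L[ℝ] Y) : Prop :=
  FiniteDimensional ℝ ↥(LinearMap.range T.toLinearMap)

/-- A porous subset of a (pseudo)metric space. -/
def IsPorous {M : Type*} [PseudoMetricSpace M] (A : Set M) : Prop :=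
  ∃ lam : ℝ, 0 < lam ∧ lam ≤ 1 ∧ ∃ r₀ > (0 : ℝ), ∀ x : M, ∀ r : ℝ, 0 < r → r ≤ r₀ →
    ∃ y : M, Metric.ball y (lam * r) ⊆ Metric.ball x r ∩ Aᶜ

/-- A σ-porous subset of a (pseudo)metric space. -/
def IsSigmaPorous {M : Type*} [PseudoMetricSpace M] (A : Set M) : Prop :=
  ∃ f : ℕ → Set M, (∀ n, IsPorous (f n)) ∧ A = ⋃ n, f n

-- auxiliary lemmas

lemma almost_norming {E : Type*} [NormedAddCommGroup E] [NormedSpace ℝ E]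
    (f : E →L[ℝ] ℝ) (hf : ‖f‖ = 1) {η : ℝ} (hη : 0 < η) :
    ∃ y : E, ‖y‖ ≤ 1 ∧ 1 - η ≤ f y := by
  obtain ⟨x, hx1, hx2⟩ := f.exists_lt_apply_of_lt_opNorm (r := 1 - η)
    (by rw [hf]; linarith)
  rcases le_or_gt 0 (f x) with h | h
  · exact ⟨x, hx1.le, by rw [Real.norm_eq_abs, abs_of_nonneg h] at hx2; linarith⟩
  · refine ⟨-x, by simpa using hx1.le, ?_⟩
    rw [map_neg]
    rw [Real.norm_eq_abs, abs_of_neg h] at hx2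
    linarith




lemma sq_step (a b t : ℝ) (ha : 0 ≤ a) (hb : 0 ≤ b) (h : a + b ≤ 2 * t) :
    a * b ≤ t ^ 2 := by nlinarith [sq_nonneg (a - b), sq_nonneg (a + b - 2 * t)]

lemma diff_sq_step (x s : ℝ) (h1 : x ≤ 3 * s) (h2 : -(3 * s) ≤ x) :
    x ^ 2 ≤ 9 * (s * s) := by nlinarith

lemma step4 (m δ c d s ϖ₁ : ℝ)
    (hcd : c * d = m ^ 2 - ((c - d) / 2) ^ 2)
    (hdiff : (c - d) ^ 2 ≤ 9 * (s * s))
    (e3 : (s * ϖ₁) * (s * ϖ₁) ≤ s * s)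
    (e4 : s * s ≤ s * (ϖ₁ / 100))
    (h2mδ : δ ≤ 2 * (m * δ))
    (eδ2 : δ * δ = (s * ϖ₁) * (s * ϖ₁) / 16)
    (eδ1 : δ = s * ϖ₁ / 4) :
    (m - δ) ^ 2 ≤ c * d - s * ϖ₁ / 16 - s * ϖ₁ / 8 := by nlinarith

lemma step5 (c d σ u : ℝ) (h52 : c * d * (1 - σ) ≤ 1 * (1 - σ))
    (hσl : 1 - u / 16 ≤ σ) : c * d - u / 16 ≤ c * d * σ := by nlinarith

lemma key_ineq (ϖ₁ s a' b' α β d₀ σ A B V : ℝ)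
    (hϖ0 : 0 < ϖ₁) (hϖ1 : ϖ₁ ≤ 1)
    (hs0 : 0 < s) (hs1 : s ≤ ϖ₁ / 100)
    (ha'1 : a' ≤ 1) (hb'1 : b' ≤ 1)
    (hα : 0 ≤ α) (hβ : 0 ≤ β)
    (hsum : α + β ≤ a' + b' - ϖ₁)
    (hd₀l : 1 - s * ϖ₁ / 2 ≤ d₀) (hd₀u : d₀ ≤ 1)
    (hσl : 1 - s * ϖ₁ / 16 ≤ σ) (hσu : σ ≤ 1)
    (hA : |A| ≤ (1 - s) + s * α) (hB : |B| ≤ (1 - s) + s * β)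
    (hV : |V| ≤ 1) :
    A * B * V ≤ ((1 - s) + s * a') * ((1 - s) * d₀ + s * b') * σ - s * ϖ₁ / 8 := by
  have hs100 : s ≤ 1 / 100 := le_trans hs1 (by linarith only [hs1, hϖ1, hϖ0])
  have h1s : (0:ℝ) ≤ 1 - s := by linarith only [hs100]
  set c : ℝ := (1 - s) + s * a' with hc
  set d : ℝ := (1 - s) * d₀ + s * b' with hd
  set A₁ : ℝ := (1 - s) + s * α with hA₁
  set B₁ : ℝ := (1 - s) + s * β with hB₁
  set m : ℝ := (c + d) / 2 with hm
  set δ : ℝ := s * ϖ₁ / 4 with hδ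
  clear_value c d A₁ B₁ m δ
  have hδ0 : 0 ≤ δ := by rw [hδ]; positivity
  have ha'l : ϖ₁ - 1 ≤ a' := by linarith only [hsum, hα, hβ, hb'1]
  have hb'l : ϖ₁ - 1 ≤ b' := by linarith only [hsum, hα, hβ, ha'1]
  have hA₁0 : 0 ≤ A₁ := by
    have h := mul_nonneg hs0.le hα; rw [hA₁]; linarith only [h, hs100]
  have hB₁0 : 0 ≤ B₁ := by
    have h := mul_nonneg hs0.le hβ; rw [hB₁]; linarith only [h, hs100]
  -- step 1
  have h1 : A * B * V ≤ A₁ * B₁ := by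
    calc A * B * V ≤ |A * B * V| := le_abs_self _
      _ = |A| * |B| * |V| := by rw [abs_mul, abs_mul]
      _ ≤ A₁ * B₁ * 1 := by
          apply mul_le_mul (mul_le_mul hA hB (abs_nonneg B) hA₁0) hV (abs_nonneg V)
          exact mul_nonneg hA₁0 hB₁0
      _ = A₁ * B₁ := mul_one _
  -- auxiliary product bounds
  have e2 : (0:ℝ) ≤ s * ϖ₁ := by positivity
  have e1 : s * ϖ₁ ≤ s := by
    have h := mul_le_mul_of_nonneg_left hϖ1 hs0.le; linarith only [h]
  have e3 : (s * ϖ₁) * (s * ϖ₁) ≤ s * s := mul_le_mul e1 e1 e2 hs0.le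
  have e4 : s * s ≤ s * (ϖ₁ / 100) := mul_le_mul_of_nonneg_left hs1 hs0.le
  have e5 : (0:ℝ) ≤ s * s * ϖ₁ := by positivity
  have ed₀ : (1 - s) * (1 - s * ϖ₁ / 2) ≤ (1 - s) * d₀ :=
    mul_le_mul_of_nonneg_left hd₀l h1s
  have ed₀' : (1 - s) * d₀ ≤ (1 - s) * 1 := mul_le_mul_of_nonneg_left hd₀u h1s
  have ea' : s * (ϖ₁ - 1) ≤ s * a' := mul_le_mul_of_nonneg_left ha'l hs0.le
  have ea'' : s * a' ≤ s * 1 := mul_le_mul_of_nonneg_left ha'1 hs0.le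
  have eb' : s * (ϖ₁ - 1) ≤ s * b' := mul_le_mul_of_nonneg_left hb'l hs0.le
  have eb'' : s * b' ≤ s * 1 := mul_le_mul_of_nonneg_left hb'1 hs0.le
  -- bounds on c, d
  have hc_low : 1 - 2 * s ≤ c := by rw [hc]; linarith only [ea', e2]
  have hc_up : c ≤ 1 := by rw [hc]; linarith only [ea'']
  have hd_low : 1 - 2 * s - s * ϖ₁ / 2 ≤ d := by
    rw [hd]; linarith only [ed₀, eb', e2, e5]
  have hd_up : d ≤ 1 := by rw [hd]; linarith only [ed₀', eb'']
  have hc0 : 0 ≤ c := by linarith only [hc_low, hs100]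
  have hd0 : 0 ≤ d := by linarith only [hd_low, hs100, e1]
  -- step 2: sum bound
  have hAB_sum : A₁ + B₁ ≤ 2 * (m - δ) := by
    have h'' : s * (α + β) ≤ s * (a' + b' - ϖ₁) :=
      mul_le_mul_of_nonneg_left hsum hs0.le
    rw [hA₁, hB₁, hm, hδ, hc, hd]
    linarith only [h'', ed₀, e5]
  -- step 3
  have h3 : A₁ * B₁ ≤ (m - δ) ^ 2 := by
    have h30 : 0 ≤ A₁ + B₁ := by linarith only [hA₁0, hB₁0]
    exact sq_step A₁ B₁ (m - δ) hA₁0 hB₁0 hAB_sum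
  -- step 4
  have hcd_diff : (c - d) ^ 2 ≤ 9 * (s * s) := by
    have hu : c - d ≤ 3 * s := by
      rw [hc, hd]; linarith only [ed₀, ea'', eb', e2, e5, hs0.le]
    have hl : -(3 * s) ≤ c - d := by
      rw [hc, hd]; linarith only [ed₀', eb'', ea', e2, hs0.le]
    exact diff_sq_step (c - d) s hu hl
  have hm_low : 1 / 2 ≤ m := by
    rw [hm]; linarith only [hc_low, hd_low, hs100, e1]
  have h2mδ : δ ≤ 2 * (m * δ) := by
    have h := mul_le_mul_of_nonneg_right hm_low hδ0
    linarith only [h]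
  have h4 : (m - δ) ^ 2 ≤ c * d - s * ϖ₁ / 16 - s * ϖ₁ / 8 := by
    have hcd : c * d = m ^ 2 - ((c - d) / 2) ^ 2 := by rw [hm]; ring
    have eδ2 : δ * δ = (s * ϖ₁) * (s * ϖ₁) / 16 := by rw [hδ]; ring
    have eδ1 : δ = s * ϖ₁ / 4 := hδ
    exact step4 m δ c d s ϖ₁ hcd hcd_diff e3 e4 h2mδ eδ2 eδ1
  -- step 5
  have h5 : c * d - s * ϖ₁ / 16 ≤ c * d * σ := by
    have h51 : c * d ≤ 1 := by
      have h := mul_le_mul hc_up hd_up hd0 (by norm_num : (0:ℝ) ≤ 1)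
      linarith only [h]
    have h52 : c * d * (1 - σ) ≤ 1 * (1 - σ) :=
      mul_le_mul_of_nonneg_right h51 (by linarith only [hσu])
    exact step5 c d σ (s * ϖ₁) h52 hσl
  calc A * B * V ≤ A₁ * B₁ := h1
    _ ≤ (m - δ) ^ 2 := h3
    _ ≤ c * d - s * ϖ₁ / 16 - s * ϖ₁ / 8 := h4
    _ ≤ c * d * σ - s * ϖ₁ / 8 := by linarith only [h5]

theorem statement12
    [CompleteSpace X] [CompleteSpace Y] [CompleteSpace W]
    (L : Set (X × (Y →L[ℝ] ℝ))) (hLne : L.Nonempty)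
    (hLsphere : ∀ p ∈ L, ‖p.1‖ = 1 ∧ ‖p.2‖ = 1)
    (hLsym : ∀ p ∈ L, -p ∈ L) (hLclosed : IsClosed L)
    (hP : PropP L)
    {Z : Type*} [NormedAddCommGroup Z] [NormedSpace ℝ Z] [CompleteSpace Z]
    (j : Z →ₗ[ℝ] (X × (Y →L[ℝ] ℝ)) → W)
    (hjinj : Function.Injective j)
    (hjmem : ∀ Φ : Z, IsCbe L (j Φ))
    (hjnorm : ∀ Φ : Z, supNormOn L (j Φ) ≤ ‖Φ‖)
    (hjcontains : ∀ T : X →L[ℝ] Y, FinRank T → ∀ w : W,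
      ∃ Φ : Z, (∀ p ∈ L, j Φ p = (p.2 (T p.1)) • w) ∧ ‖Φ‖ ≤ ‖T‖ * ‖w‖) :
    ∃ ε₀ > (0 : ℝ), ∀ ε : ℝ, 0 < ε → ε < ε₀ → ∃ ϖ > (0 : ℝ),
      ∀ p ∈ L, ∀ ws : W →L[ℝ] ℝ, ‖ws‖ = 1 →
        ∃ Φ : Z, ‖Φ‖ ≤ 1 ∧ ∀ q ∈ L, ∀ vs : W →L[ℝ] ℝ, ‖vs‖ = 1 →
          ε ≤ dHG p q → vs (j Φ q) ≤ ws (j Φ p) - ϖ := by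
  obtain ⟨ε₀, hε₀, hPP⟩ := hP
  refine ⟨ε₀, hε₀, ?_⟩
  intro ε hε hεε₀
  obtain ⟨ϖ₀, hϖ₀, hϖ⟩ := hPP ε hε hεε₀
  set ϖ₁ : ℝ := min ϖ₀ 1 with hϖ₁def
  have hϖ₁pos : 0 < ϖ₁ := lt_min hϖ₀ one_pos
  have hϖ₁le1 : ϖ₁ ≤ 1 := min_le_right _ _
  set s : ℝ := ϖ₁ ^ 2 / 100 with hsdef
  have hs0 : 0 < s := by positivity
  have hs1 : s ≤ ϖ₁ / 100 := by
    rw [hsdef]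
    have : ϖ₁ ^ 2 ≤ ϖ₁ * 1 := by nlinarith
    linarith only [this]
  refine ⟨s * ϖ₁ / 8, by positivity, ?_⟩
  intro p hp ws hws
  obtain ⟨xs, ye, hxs, hye, hkey⟩ := hϖ p hp
  obtain ⟨hp1, hp2⟩ := hLsphere p hp
  have hp1ne : p.1 ≠ 0 := by
    intro h; rw [h, norm_zero] at hp1; exact one_ne_zero hp1.symm
  obtain ⟨x₀s, hx₀norm, hx₀val⟩ := exists_dual_vector ℝ p.1 (norm_ne_zero_iff.mpr hp1ne)
  obtain ⟨y₀, hy₀norm, hy₀val⟩ := almost_norming p.2 hp2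
    (show (0:ℝ) < s * ϖ₁ / 2 by positivity)
  obtain ⟨w, hwnorm, hwval⟩ := almost_norming ws hws
    (show (0:ℝ) < s * ϖ₁ / 16 by positivity)
  set u : X →L[ℝ] ℝ := (1 - s) • x₀s + s • xs with hu
  set ye' : Y := (1 - s) • y₀ + s • ye with hye'
  set T : X →L[ℝ] Y := u.smulRight ye' with hT
  have h1s : (0:ℝ) ≤ 1 - s := by nlinarith
  have hTfin : FinRank T := by
    have hle : LinearMap.range T.toLinearMap ≤ ℝ ∙ ye' := by
      rintro _ ⟨x, rfl⟩
      exact Submodule.mem_span_singleton.2 ⟨u x, by simp [hT]⟩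
    exact Submodule.finiteDimensional_of_le hle
  have hunorm : ‖u‖ ≤ 1 := by
    rw [hu]
    refine le_trans (norm_add_le _ _) ?_
    have h1 : ‖(1 - s) • x₀s‖ ≤ (1 - s) * 1 := by
      refine le_trans (ContinuousLinearMap.opNorm_smul_le _ _) ?_
      rw [Real.norm_eq_abs, abs_of_nonneg h1s]
      exact mul_le_mul_of_nonneg_left hx₀norm.le h1s
    have h2 : ‖s • xs‖ ≤ s * 1 := by
      refine le_trans (ContinuousLinearMap.opNorm_smul_le _ _) ?_
      rw [Real.norm_eq_abs, abs_of_nonneg hs0.le]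
      exact mul_le_mul_of_nonneg_left hxs hs0.le
    linarith only [h1, h2]
  have hyenorm : ‖ye'‖ ≤ 1 := by
    rw [hye']
    refine le_trans (norm_add_le _ _) ?_
    have h1 : ‖(1 - s) • y₀‖ ≤ (1 - s) * 1 := by
      refine le_trans (norm_smul_le _ _) ?_
      rw [Real.norm_eq_abs, abs_of_nonneg h1s]
      exact mul_le_mul_of_nonneg_left hy₀norm h1s
    have h2 : ‖s • ye‖ ≤ s * 1 := by
      refine le_trans (norm_smul_le _ _) ?_
      rw [Real.norm_eq_abs, abs_of_nonneg hs0.le]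
      exact mul_le_mul_of_nonneg_left hye hs0.le
    linarith only [h1, h2]
  have hTnorm : ‖T‖ ≤ 1 := by
    rw [hT, ContinuousLinearMap.norm_smulRight_apply]
    have := mul_le_mul hunorm hyenorm (norm_nonneg _) zero_le_one
    linarith only [this]
  obtain ⟨Φ, hΦval, hΦnorm⟩ := hjcontains T hTfin w
  have hΦ1 : ‖Φ‖ ≤ 1 := by
    refine le_trans hΦnorm ?_
    have := mul_le_mul hTnorm hwnorm (norm_nonneg _) zero_le_one
    linarith only [this]
  refine ⟨Φ, hΦ1, ?_⟩
  intro q hq vs hvs hfar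
  obtain ⟨hq1, hq2⟩ := hLsphere q hq
  have hkq : |xs q.1| + |q.2 ye| ≤ xs p.1 + p.2 ye - ϖ₁ := by
    have h := hkey q hq hfar
    have h2 : ϖ₁ ≤ ϖ₀ := min_le_left _ _
    linarith only [h, h2]
  -- values of jΦ
  have happ : ∀ r : X × (Y →L[ℝ] ℝ), r ∈ L → j Φ r = (u r.1 * r.2 ye') • w := by
    intro r hr
    rw [hΦval r hr, hT]
    congr 1
    rw [ContinuousLinearMap.smulRight_apply, map_smul, smul_eq_mul]
  have hup : u p.1 = (1 - s) + s * xs p.1 := by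
    rw [hu]
    simp only [ContinuousLinearMap.add_apply, ContinuousLinearMap.coe_smul',
      Pi.smul_apply, smul_eq_mul, hx₀val, hp1, RCLike.ofReal_one, mul_one]
  have hpye' : p.2 ye' = (1 - s) * p.2 y₀ + s * p.2 ye := by
    rw [hye', map_add, map_smul, map_smul, smul_eq_mul, smul_eq_mul]
  have hqye' : q.2 ye' = (1 - s) * q.2 y₀ + s * q.2 ye := by
    rw [hye', map_add, map_smul, map_smul, smul_eq_mul, smul_eq_mul]
  have huq : u q.1 = (1 - s) * x₀s q.1 + s * xs q.1 := by
    rw [hu]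
    simp only [ContinuousLinearMap.add_apply, ContinuousLinearMap.coe_smul',
      Pi.smul_apply, smul_eq_mul]
  rw [happ q hq, happ p hp, map_smul, map_smul, smul_eq_mul, smul_eq_mul,
    hup, hpye']
  -- abs bounds from operator norms
  have habsX : ∀ (f : X →L[ℝ] ℝ) (x : X), |f x| ≤ ‖f‖ * ‖x‖ := fun f x => by
    rw [← Real.norm_eq_abs]; exact f.le_opNorm x
  have habsY : ∀ (f : Y →L[ℝ] ℝ) (y : Y), |f y| ≤ ‖f‖ * ‖y‖ := fun f y => by
    rw [← Real.norm_eq_abs]; exact f.le_opNorm y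
  have habsW : ∀ (f : W →L[ℝ] ℝ) (x : W), |f x| ≤ ‖f‖ * ‖x‖ := fun f x => by
    rw [← Real.norm_eq_abs]; exact f.le_opNorm x
  have ha'1 : xs p.1 ≤ 1 := by
    have h := habsX xs p.1; rw [hp1, mul_one] at h
    have := le_abs_self (xs p.1)
    linarith only [h, hxs, this]
  have hb'1 : p.2 ye ≤ 1 := by
    have h := habsY p.2 ye; rw [hp2, one_mul] at h
    have := le_abs_self (p.2 ye)
    linarith only [h, hye, this]
  have hd₀u : p.2 y₀ ≤ 1 := by
    have h := habsY p.2 y₀; rw [hp2, one_mul] at h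
    have := le_abs_self (p.2 y₀)
    linarith only [h, hy₀norm, this]
  have hσu : ws w ≤ 1 := by
    have h := habsW ws w; rw [hws, one_mul] at h
    have := le_abs_self (ws w)
    linarith only [h, hwnorm, this]
  have hA : |u q.1| ≤ (1 - s) + s * |xs q.1| := by
    rw [huq]
    have h0 := abs_add_le ((1 - s) * x₀s q.1) (s * xs q.1)
    rw [abs_mul, abs_mul, abs_of_nonneg h1s, abs_of_nonneg hs0.le] at h0
    have h1 : |x₀s q.1| ≤ 1 := by
      have h := habsX x₀s q.1; rw [hx₀norm, hq1, one_mul] at h; exact h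
    have h2 := mul_le_mul_of_nonneg_left h1 h1s
    linarith only [h0, h2]
  have hB : |q.2 ye'| ≤ (1 - s) + s * |q.2 ye| := by
    rw [hqye']
    have h0 := abs_add_le ((1 - s) * q.2 y₀) (s * q.2 ye)
    rw [abs_mul, abs_mul, abs_of_nonneg h1s, abs_of_nonneg hs0.le] at h0
    have h1 : |q.2 y₀| ≤ 1 := by
      have h := habsY q.2 y₀; rw [hq2, one_mul] at h
      linarith only [h, hy₀norm]
    have h2 := mul_le_mul_of_nonneg_left h1 h1s
    linarith only [h0, h2]
  have hV : |vs w| ≤ 1 := by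
    have h := habsW vs w; rw [hvs, one_mul] at h
    linarith only [h, hwnorm]
  have := key_ineq ϖ₁ s (xs p.1) (p.2 ye) (|xs q.1|) (|q.2 ye|) (p.2 y₀) (ws w)
    (u q.1) (q.2 ye') (vs w)
    hϖ₁pos hϖ₁le1 hs0 hs1 ha'1 hb'1 (abs_nonneg _) (abs_nonneg _) hkq
    hy₀val hd₀u hwval hσu hA hB hV
  linarith only [this]


end
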